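/- arXiv:math/0402022 — 3 statements merged into one kernel-verified Lean document; each statement's English description precedes it below -/
import Mathlib

section
/- The category of commutative n-algebras over a field k of characteristic zero has an initial object (C_n, λ_n): there exists a commutative unital k-algebra C_n together with a linear map λ_n : C_n^{⊗n} → C_n such that for every commutative n-algebra (A, α) there is a unique unital algebra homomorphism f : C_n → A satisfying α ∘ f^{⊗n} = f ∘ λ_n. -/
open scoped TensorProduct

/-- A commutative `n`-algebra over `k`: a commutative unital `k`-algebra `A`
together with a linear map `α : A^{⊗n} → A`. -/
structure CommNAlgebra (k : Type) [CommRing k] (n : ℕ) : Type 1 where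
  carrier : Type
  [isCommRing : CommRing carrier]
  [isAlgebra : Algebra k carrier]
  op : (⨂[k]^n carrier) →ₗ[k] carrier

attribute [instance] CommNAlgebra.isCommRing CommNAlgebra.isAlgebra

/-- `f : C → A` is a morphism of `n`-algebras: a unital algebra homomorphism
with `α ∘ f^{⊗n} = f ∘ λ`. -/
def CommNAlgebra.IsHom {k : Type} [CommRing k] {n : ℕ} (C A : CommNAlgebra k n)
    (f : C.carrier →ₐ[k] A.carrier) : Prop :=
  A.op ∘ₗ (PiTensorProduct.map fun _ : Fin n => f.toLinearMap) = f.toLinearMap ∘ₗ C.op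


inductive PreTree : Type
  | node : List (List PreTree) → PreTree

noncomputable instance : DecidableEq PreTree := Classical.decEq _

inductive Canon (n : ℕ) : PreTree → Prop
  | node (ll : List (List PreTree)) (hlen : ll.length = n)
      (hcanon : ∀ l ∈ ll, l = (↑l : Multiset PreTree).toList)
      (hmem : ∀ l ∈ ll, ∀ t ∈ l, Canon n t) : Canon n (.node ll)

abbrev CTree (n : ℕ) : Type := {t : PreTree // Canon n t}

noncomputable instance {n : ℕ} : DecidableEq (CTree n) := Classical.decEq _

/-- the canonical tree attached to a family of monomial exponents -/
noncomputable def canonNode {n : ℕ} (d : Fin n → (CTree n →₀ ℕ)) : CTree n :=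
  ⟨.node (List.ofFn fun i => (((d i).toMultiset).map Subtype.val).toList), by
    refine Canon.node _ List.length_ofFn ?_ ?_
    · intro l hl
      obtain ⟨i, rfl⟩ := List.mem_ofFn.mp hl
      rw [Multiset.coe_toList]
    · intro l hl t ht
      obtain ⟨i, rfl⟩ := List.mem_ofFn.mp hl
      rw [Multiset.mem_toList, Multiset.mem_map] at ht
      obtain ⟨s, _, rfl⟩ := ht
      exact s.2⟩

variable (k : Type) [CommRing k] (n : ℕ)

noncomputable def glue : MvPolynomial (Fin n × CTree n) k →ₗ[k] MvPolynomial (CTree n) k :=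
  (MvPolynomial.basisMonomials (Fin n × CTree n) k).constr k
    (fun m => MvPolynomial.X (canonNode (fun i => m.curry i)))

noncomputable def mulML :
    MultilinearMap k (fun _ : Fin n => MvPolynomial (CTree n) k)
      (MvPolynomial (Fin n × CTree n) k) :=
  (MultilinearMap.mkPiAlgebra k (Fin n) _).compLinearMap
    (fun i => (MvPolynomial.rename (Prod.mk i)).toLinearMap)

noncomputable def lam :
    (⨂[k]^n (MvPolynomial (CTree n) k)) →ₗ[k] MvPolynomial (CTree n) k :=
  PiTensorProduct.lift ((glue k n).compMultilinearMap (mulML k n))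

theorem curry_sum_mapDomain (d : Fin n → (CTree n →₀ ℕ)) (j : Fin n) :
    (Finsupp.curry (∑ i : Fin n, Finsupp.mapDomain (Prod.mk i) (d i))) j = d j := by
  ext t
  rw [Finsupp.curry_apply]
  rw [Finsupp.finset_sum_apply]
  rw [Finset.sum_eq_single j]
  · exact Finsupp.mapDomain_apply (fun a b h => by simpa using h) _ _
  · intro i _ hij
    apply Finsupp.mapDomain_notin_range
    rintro ⟨s, hs⟩
    exact hij (congrArg Prod.fst hs)
  · simp

theorem prod_monomial (d : Fin n → ((Fin n × CTree n) →₀ ℕ)) :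
    (∏ i : Fin n, MvPolynomial.monomial (d i) (1 : k)) =
      MvPolynomial.monomial (∑ i : Fin n, d i) 1 := by
  classical
  induction (Finset.univ : Finset (Fin n)) using Finset.induction with
  | empty => simp [MvPolynomial.monomial_zero']
  | insert a s h ih =>
      rw [Finset.prod_insert h, Finset.sum_insert h, ih, MvPolynomial.monomial_mul, one_mul]

theorem lam_tprod_monomial (d : Fin n → (CTree n →₀ ℕ)) :
    lam k n (PiTensorProduct.tprod k fun i => MvPolynomial.monomial (d i) 1) =
      MvPolynomial.X (canonNode d) := by
  rw [lam, PiTensorProduct.lift.tprod]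
  show glue k n (mulML k n _) = _
  have : mulML k n (fun i => MvPolynomial.monomial (d i) 1) =
      MvPolynomial.monomial (∑ i : Fin n, Finsupp.mapDomain (Prod.mk i) (d i)) 1 := by
    rw [mulML]
    simp only [MultilinearMap.compLinearMap_apply, MultilinearMap.mkPiAlgebra_apply,
      AlgHom.toLinearMap_apply, MvPolynomial.rename_monomial]
    exact prod_monomial k n _
  rw [this]
  have hb : (MvPolynomial.monomial (∑ i : Fin n, Finsupp.mapDomain (Prod.mk i) (d i)) (1:k)) =
      (MvPolynomial.basisMonomials (Fin n × CTree n) k)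
        (∑ i : Fin n, Finsupp.mapDomain (Prod.mk i) (d i)) := by
    rw [MvPolynomial.coe_basisMonomials]
  rw [hb, glue, Module.Basis.constr_basis]
  congr 1
  congr 1
  funext j
  exact curry_sum_mapDomain n d j

variable {k n}

/-- interpretation of trees in an n-algebra -/
noncomputable def interp (A : Type) [CommRing A] [Algebra k A]
    (op : (⨂[k]^n A) →ₗ[k] A) : PreTree → A
  | .node ll =>
    if h : ll.length = n then
      op (PiTensorProduct.tprod k fun i : Fin n =>
        (((ll.get (Fin.cast h.symm i)).attach).map
          (fun s => interp A op s.1)).prod)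
    else 0
  termination_by t => sizeOf t
  decreasing_by
    have h1 : sizeOf s.1 < sizeOf (ll.get (Fin.cast h.symm i)) :=
      List.sizeOf_lt_of_mem s.2
    have h2 : sizeOf (ll.get (Fin.cast h.symm i)) < sizeOf ll :=
      List.sizeOf_lt_of_mem (ll.get_mem _)
    simp only [PreTree.node.sizeOf_spec]
    omega

/-- product over a finsupp exponent via multiset -/
theorem multiset_prod_pow {α β : Type} [CommMonoid β] (m : α →₀ ℕ) (g : α → β) :
    ((Finsupp.toMultiset m).map g).prod = m.prod fun a e => g a ^ e := by
  classical
  rw [Finsupp.toMultiset_map, Finsupp.prod_toMultiset]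
  exact Finsupp.prod_mapDomain_index (fun b => pow_zero _) (fun b m₁ m₂ => pow_add _ _ _)

theorem list_prod_eq {A : Type} [CommMonoid A] (m : Multiset PreTree) (g : PreTree → A) :
    (m.toList.map g).prod = (m.map g).prod := by
  have h : (↑(m.toList.map g) : Multiset A) = m.map g := by
    rw [← Multiset.map_coe, Multiset.coe_toList]
  calc (m.toList.map g).prod = (↑(m.toList.map g) : Multiset A).prod := by
        rw [Multiset.prod_coe]
    _ = (m.map g).prod := by rw [h]

theorem interp_canonNode (A : Type) [CommRing A] [Algebra k A]
    (op : (⨂[k]^n A) →ₗ[k] A) (d : Fin n → (CTree n →₀ ℕ)) :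
    interp A op (canonNode d).1 =
      op (PiTensorProduct.tprod k fun i =>
        (d i).prod fun t e => interp A op t.1 ^ e) := by
  rw [canonNode, interp]
  rw [dif_pos List.length_ofFn]
  congr 1
  congr 1
  funext i
  rw [List.attach_map_val]
  rw [List.get_ofFn]
  rw [list_prod_eq, Multiset.map_map]
  have hcc : ∀ (h1 : n = n), Fin.cast h1 i = i := fun _ => rfl
  rw [show (Fin.cast List.length_ofFn (Fin.cast (List.length_ofFn
      (f := fun i => (((d i).toMultiset).map Subtype.val).toList)).symm i)) = i from Fin.ext rfl]
  rw [show ((fun t : PreTree => interp A op t) ∘ Subtype.val)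
      = fun t : CTree n => interp A op t.1 from rfl]
  exact multiset_prod_pow (d i) (fun t => interp A op t.1)


theorem algHom_monomial {k : Type} [CommRing k] {n : ℕ} {B : Type} [CommRing B] [Algebra k B]
    (f : MvPolynomial (CTree n) k →ₐ[k] B) (d : CTree n →₀ ℕ) :
    f (MvPolynomial.monomial d 1) = d.prod fun s e => f (MvPolynomial.X s) ^ e := by
  rw [MvPolynomial.monomial_eq, map_mul, map_finsuppProd]
  simp [map_pow]


/-- The category of commutative `n`-algebras over a field `k`
of characteristic zero has an initial object `(C_n, λ_n)`: there is a
commutative unital `k`-algebra `C_n` with a linear map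
`λ_n : C_n^{⊗n} → C_n` such that every commutative `n`-algebra `(A, α)`
admits a unique unital algebra homomorphism `f : C_n → A` satisfying
`α ∘ f^{⊗n} = f ∘ λ_n`. -/
theorem exists_initial_commNAlgebra (k : Type) [Field k] [CharZero k] (n : ℕ) :
    ∃ C : CommNAlgebra k n, ∀ A : CommNAlgebra k n,
      ∃! f : C.carrier →ₐ[k] A.carrier, C.IsHom A f := by
  classical
  refine ⟨{ carrier := MvPolynomial (CTree n) k, op := lam k n }, fun A => ?_⟩
  set g : CTree n → A.carrier := fun t => interp A.carrier A.op t.1 with hg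
  have hex : CommNAlgebra.IsHom { carrier := MvPolynomial (CTree n) k, op := lam k n } A
      (MvPolynomial.aeval g : MvPolynomial (CTree n) k →ₐ[k] A.carrier) := by
    unfold CommNAlgebra.IsHom
    apply PiTensorProduct.ext
    apply Module.Basis.ext_multilinear (fun _ => MvPolynomial.basisMonomials (CTree n) k)
    intro v
    simp only [LinearMap.compMultilinearMap_apply, MvPolynomial.coe_basisMonomials,
      LinearMap.coe_comp, Function.comp_apply]
    rw [PiTensorProduct.map_tprod]
    show A.op _ = (MvPolynomial.aeval g).toLinearMap (lam k n _)
    rw [AlgHom.toLinearMap_apply, lam_tprod_monomial, MvPolynomial.aeval_X, hg]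
    show A.op _ = interp A.carrier A.op (canonNode v).1
    rw [interp_canonNode]
    congr 1
    congr 1
    funext i
    rw [AlgHom.toLinearMap_apply, MvPolynomial.aeval_monomial, map_one, one_mul]
  have hexe : ∀ x, A.op ((PiTensorProduct.map fun _ : Fin n =>
      (MvPolynomial.aeval g : MvPolynomial (CTree n) k →ₐ[k] A.carrier).toLinearMap) x)
      = MvPolynomial.aeval g (lam k n x) :=
    fun x => congrFun (congrArg DFunLike.coe hex) x
  refine ⟨MvPolynomial.aeval g, hex, ?_⟩
  intro f' hf'
  have hf'e : ∀ x, A.op ((PiTensorProduct.map fun _ : Fin n => f'.toLinearMap) x)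
      = f' (lam k n x) := fun x => congrFun (congrArg DFunLike.coe hf') x
  have key : ∀ N (t : CTree n), sizeOf t.1 < N →
      f' (MvPolynomial.X t) = (MvPolynomial.aeval g :
        MvPolynomial (CTree n) k →ₐ[k] A.carrier) (MvPolynomial.X t) := by
    intro N
    induction N with
    | zero => intro t ht; exact absurd ht (Nat.not_lt_zero _)
    | succ N ih =>
      rintro ⟨tt, hc⟩ ht
      cases hc with
      | node ll hlen hcanon hmem =>
        set L : Fin n → List PreTree := fun i => ll.get (Fin.cast hlen.symm i) with hL
        have hLmem : ∀ i, L i ∈ ll := fun i => ll.get_mem _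
        set d : Fin n → CTree n →₀ ℕ := fun i =>
          Multiset.toFinsupp (((L i).attach.map
            (fun s => (⟨s.1, hmem _ (hLmem i) s.1 s.2⟩ : CTree n)) : List (CTree n))
              : Multiset (CTree n)) with hd
        have hdm : ∀ i, ((d i).toMultiset.map Subtype.val) = (↑(L i) : Multiset PreTree) := by
          intro i
          simp only [hd]
          rw [Multiset.toFinsupp_toMultiset, ← Multiset.map_coe, Multiset.map_map,
            Multiset.map_coe]
          congr 1
          simp
        have hnode : canonNode d = ⟨.node ll, Canon.node ll hlen hcanon hmem⟩ := by
          apply Subtype.ext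
          show PreTree.node _ = PreTree.node ll
          congr 1
          apply List.ext_getElem
          · simp [hlen]
          · intro j h1 h2
            simp only [List.getElem_ofFn]
            rw [hdm, ← hcanon _ (hLmem _)]
            simp [hL, List.get_eq_getElem]
        have hsupp : ∀ i, ∀ s ∈ (d i).support, sizeOf (s : CTree n).1 < N := by
          intro i s hs
          rw [← Finsupp.mem_toMultiset] at hs
          simp only [hd] at hs
          rw [Multiset.toFinsupp_toMultiset, Multiset.mem_coe, List.mem_map] at hs
          obtain ⟨x, hx, rfl⟩ := hs
          have h1 : sizeOf x.1 < sizeOf (L i) := List.sizeOf_lt_of_mem x.2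
          have h2 : sizeOf (L i) < sizeOf ll := List.sizeOf_lt_of_mem (hLmem i)
          have h3 : sizeOf (PreTree.node ll) < N + 1 := ht
          simp only [PreTree.node.sizeOf_spec] at h3
          show sizeOf x.1 < N
          omega
        have hX : (MvPolynomial.X (⟨.node ll, Canon.node ll hlen hcanon hmem⟩ : CTree n)
            : MvPolynomial (CTree n) k)
            = lam k n (PiTensorProduct.tprod k fun i => MvPolynomial.monomial (d i) 1) := by
          rw [lam_tprod_monomial, hnode]
        rw [hX, ← hf'e, ← hexe, PiTensorProduct.map_tprod, PiTensorProduct.map_tprod]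
        congr 1
        congr 1
        funext i
        rw [AlgHom.toLinearMap_apply, AlgHom.toLinearMap_apply, algHom_monomial,
          algHom_monomial]
        apply Finsupp.prod_congr
        intro s hs
        rw [ih s (hsupp i s hs)]
  apply MvPolynomial.algHom_ext
  intro t
  exact key (sizeOf t.1 + 1) t (Nat.lt_succ_self _)
end

section
/- Let (C_n, λ) be the initial commutative n-algebra, with augmentation ε : C_n → k the unique morphism of n-algebras to (k, 0), and for linear maps σ_1, σ_2 : C_n^{⊗n} → C_n let Δ : C_n → C_n ⊗ C_n be the unique algebra morphism with Δ ∘ λ = (σ_1, σ_2) ∘ Δ^{⊗n}. If both σ_i satisfy ε ∘ σ_i = ε^{⊗n} and Δ ∘ σ_i = (σ_i ⊗ σ_i) ∘ τ ∘ Δ^{⊗n}, then there exists a unique bialgebra structure on C_n with coproduct Δ and counit ε, i.e. such that Δ ∘ λ = (σ_1, σ_2) ∘ Δ^{⊗n} and ε ∘ λ = 0. -/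
open scoped TensorProduct
open PiTensorProduct TensorProduct

namespace UBAux

variable {k : Type} [Field k] {n : ℕ}

theorem prod_tmul {A B : Type} [CommRing A] [CommRing B] [Algebra k A] [Algebra k B]
    {ι : Type} (s : Finset ι) (x : ι → A) (y : ι → B) :
    ∏ i ∈ s, (x i ⊗ₜ[k] y i) = (∏ i ∈ s, x i) ⊗ₜ[k] (∏ i ∈ s, y i) := by
  classical
  induction s using Finset.induction_on with
  | empty => simp [Algebra.TensorProduct.one_def]
  | insert _ _ h ih =>
      rw [Finset.prod_insert h, Finset.prod_insert h, Finset.prod_insert h, ih,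
        Algebra.TensorProduct.tmul_mul_tmul]

noncomputable def sep (k : Type) [Field k] (n : ℕ) (M N : Type) [CommRing M] [Algebra k M]
    [CommRing N] [Algebra k N] :
    (⨂[k]^n (M ⊗[k] N)) →ₗ[k] (⨂[k]^n M) ⊗[k] (⨂[k]^n N) :=
  PiTensorProduct.lift <|
    (MultilinearMap.mkPiAlgebra k (Fin n) ((⨂[k]^n M) ⊗[k] (⨂[k]^n N))).compLinearMap
      fun i => TensorProduct.map
        (PiTensorProduct.singleAlgHom (R := k) (A := fun _ : Fin n => M) i).toLinearMap
        (PiTensorProduct.singleAlgHom (R := k) (A := fun _ : Fin n => N) i).toLinearMap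

theorem sep_tprod (M N : Type) [CommRing M] [Algebra k M] [CommRing N] [Algebra k N]
    (a : Fin n → M) (b : Fin n → N) :
    sep k n M N (tprod k fun i => a i ⊗ₜ[k] b i) = (tprod k a) ⊗ₜ[k] (tprod k b) := by
  rw [sep, PiTensorProduct.lift.tprod]
  simp only [MultilinearMap.compLinearMap_apply, MultilinearMap.mkPiAlgebra_apply,
    TensorProduct.map_tmul, AlgHom.toLinearMap_apply, PiTensorProduct.singleAlgHom_apply]
  rw [prod_tmul]
  congr 1 <;>
  · rw [← PiTensorProduct.tprod_prod]
    congr 1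
    exact Finset.univ_prod_mulSingle _



variable {k : Type} [Field k] {n : ℕ}

theorem span_tprod_top {D : Type} [AddCommGroup D] [Module k D] (T : Set D)
    (hT : Submodule.span k T = ⊤) :
    Submodule.span k {z : ⨂[k]^n D | ∃ p : Fin n → D, (∀ i, p i ∈ T) ∧ z = tprod k p} = ⊤ := by
  classical
  set S : Set (⨂[k]^n D) := {z | ∃ p : Fin n → D, (∀ i, p i ∈ T) ∧ z = tprod k p} with hS
  have key : ∀ (s : Finset (Fin n)) (p : Fin n → D), (∀ i ∉ s, p i ∈ T) →
      tprod k p ∈ Submodule.span k S := by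
    intro s
    induction s using Finset.induction_on with
    | empty =>
        intro p hp
        exact Submodule.subset_span ⟨p, fun i => hp i (Finset.notMem_empty i), rfl⟩
    | @insert j s hj ih =>
        intro p hp
        have hpj : p j ∈ Submodule.span k T := hT ▸ Submodule.mem_top
        have main : ∀ x ∈ Submodule.span k T,
            tprod k (Function.update p j x) ∈ Submodule.span k S := by
          intro x hx
          induction hx using Submodule.span_induction with
          | mem x hx =>
              refine ih (Function.update p j x) ?_
              intro i hi
              rcases eq_or_ne i j with rfl | hij
              · simpa using hx
              · rw [Function.update_of_ne hij]
                exact hp i (by simp [Finset.mem_insert, hij, hi])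
          | zero =>
              rw [MultilinearMap.map_update_zero]
              exact zero_mem _
          | add x y _ _ hx hy =>
              rw [MultilinearMap.map_update_add]
              exact add_mem hx hy
          | smul c x _ hx =>
              rw [MultilinearMap.map_update_smul]
              exact Submodule.smul_mem _ _ hx
        have := main (p j) hpj
        rwa [Function.update_eq_self] at this
  rw [eq_top_iff]
  intro z hz
  clear hz
  induction z using PiTensorProduct.induction_on with
  | smul_tprod r p =>
      exact Submodule.smul_mem _ _ (key Finset.univ p (fun i hi => absurd (Finset.mem_univ i) hi))
  | add x y hx hy => exact add_mem hx hy

theorem ext_of_span {D P : Type} [AddCommGroup D] [Module k D] [AddCommGroup P] [Module k P]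
    (T : Set D) (hT : Submodule.span k T = ⊤) {f g : (⨂[k]^n D) →ₗ[k] P}
    (h : ∀ p : Fin n → D, (∀ i, p i ∈ T) → f (tprod k p) = g (tprod k p)) : f = g := by
  refine LinearMap.ext fun z => ?_
  have hz : z ∈ Submodule.span k {z : ⨂[k]^n D | ∃ p : Fin n → D, (∀ i, p i ∈ T) ∧ z = tprod k p} := by
    rw [span_tprod_top T hT]; trivial
  induction hz using Submodule.span_induction with
  | mem z hz => obtain ⟨p, hp, rfl⟩ := hz; exact h p hp
  | zero => simp
  | add x y _ _ hx hy => simp [map_add, hx, hy]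
  | smul c x _ hx => simp [map_smul, hx]

theorem ext_simple {M N P : Type} [AddCommGroup M] [Module k M] [AddCommGroup N] [Module k N]
    [AddCommGroup P] [Module k P] {f g : (⨂[k]^n (M ⊗[k] N)) →ₗ[k] P}
    (h : ∀ (a : Fin n → M) (b : Fin n → N),
      f (tprod k fun i => a i ⊗ₜ[k] b i) = g (tprod k fun i => a i ⊗ₜ[k] b i)) : f = g := by
  refine ext_of_span {t : M ⊗[k] N | ∃ x y, x ⊗ₜ[k] y = t} (TensorProduct.span_tmul_eq_top k M N) ?_
  intro p hp
  choose a b hab using hp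
  have hp' : p = fun i => a i ⊗ₜ[k] b i := funext fun i => (hab i).symm
  rw [hp']
  exact h a b

theorem span_triple_top {M N Q : Type} [AddCommGroup M] [Module k M] [AddCommGroup N] [Module k N]
    [AddCommGroup Q] [Module k Q] :
    Submodule.span k {t : (M ⊗[k] N) ⊗[k] Q | ∃ x y z, (x ⊗ₜ[k] y) ⊗ₜ[k] z = t} = ⊤ := by
  rw [eq_top_iff, ← TensorProduct.span_tmul_eq_top k (M ⊗[k] N) Q, Submodule.span_le]
  rintro t ⟨u, z, rfl⟩
  induction u using TensorProduct.induction_on with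
  | zero => rw [TensorProduct.zero_tmul]; exact zero_mem _
  | tmul x y => exact Submodule.subset_span ⟨x, y, z, rfl⟩
  | add u v hu hv => rw [TensorProduct.add_tmul]; exact add_mem hu hv

theorem ext_triple {M N Q P : Type} [AddCommGroup M] [Module k M] [AddCommGroup N] [Module k N]
    [AddCommGroup Q] [Module k Q] [AddCommGroup P] [Module k P]
    {f g : (⨂[k]^n ((M ⊗[k] N) ⊗[k] Q)) →ₗ[k] P}
    (h : ∀ (a : Fin n → M) (b : Fin n → N) (c : Fin n → Q),
      f (tprod k fun i => (a i ⊗ₜ[k] b i) ⊗ₜ[k] c i)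
        = g (tprod k fun i => (a i ⊗ₜ[k] b i) ⊗ₜ[k] c i)) : f = g := by
  refine ext_of_span {t : (M ⊗[k] N) ⊗[k] Q | ∃ x y z, (x ⊗ₜ[k] y) ⊗ₜ[k] z = t}
    span_triple_top ?_
  intro p hp
  choose a b c habc using hp
  have hp' : p = fun i => (a i ⊗ₜ[k] b i) ⊗ₜ[k] c i := funext fun i => (habc i).symm
  rw [hp']
  exact h a b c


end UBAux




open scoped TensorProduct

set_option maxHeartbeats 4000000 in
open PiTensorProduct TensorProduct in
/-- Let `(C, λ)` be the initial commutative `n`-algebra over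
a field `k` of characteristic zero (`hinit`), let `ε : C → k` be the unique
morphism of `n`-algebras to `(k, 0)` (i.e. the algebra map with `ε ∘ λ = 0`),
let `τ : (C ⊗ C)^{⊗ n} ≃ (C^{⊗n}) ⊗ (C^{⊗n})` be the isomorphism separating
the first and second tensor factors, let `σ₁, σ₂ : C^{⊗n} → C` be linear maps
and let `Δ : C → C ⊗ C` be the unique algebra morphism with
`Δ ∘ λ = (σ₁, σ₂) ∘ Δ^{⊗n}`, where `(σ₁, σ₂) = (σ₁ ⊗ λ + λ ⊗ σ₂) ∘ τ`.
If both `σᵢ` satisfy `ε ∘ σᵢ = ε^{⊗n}` and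
`Δ ∘ σᵢ = (σᵢ ⊗ σᵢ) ∘ τ ∘ Δ^{⊗n}`, then there is a unique bialgebra structure
on `C` (a pair of algebra morphisms: a coassociative counital comultiplication
and a counit) such that `Δ ∘ λ = (σ₁, σ₂) ∘ Δ^{⊗n}` and `ε ∘ λ = 0`. -/
theorem unique_bialgebra_structure_on_initial
    (k : Type) [Field k] [CharZero k] (n : ℕ)
    (C : Type) [CommRing C] [Algebra k C]
    (lam : (⨂[k]^n C) →ₗ[k] C)
    -- initiality of `(C, lam)`
    (hinit : ∀ (A : Type) (_ : CommRing A) (_ : Algebra k A)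
      (α : (⨂[k]^n A) →ₗ[k] A),
      ∃! f : C →ₐ[k] A,
        α ∘ₗ (PiTensorProduct.map fun _ : Fin n => f.toLinearMap)
          = f.toLinearMap ∘ₗ lam)
    -- the augmentation: the unique morphism of `n`-algebras `(C, λ) → (k, 0)`
    (ε : C →ₐ[k] k) (hε : ε.toLinearMap ∘ₗ lam = 0)
    -- the isomorphism `τ` separating first and second tensor factors
    (τ : (⨂[k]^n (C ⊗[k] C)) ≃ₗ[k] (⨂[k]^n C) ⊗[k] (⨂[k]^n C))
    (hτ : ∀ a b : Fin n → C,
      τ (tprod k fun i => a i ⊗ₜ[k] b i) = (tprod k a) ⊗ₜ[k] (tprod k b))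
    (σ₁ σ₂ : (⨂[k]^n C) →ₗ[k] C)
    -- `Δ` is the unique algebra morphism with `Δ ∘ λ = (σ₁, σ₂) ∘ Δ^{⊗n}`
    (Δ : C →ₐ[k] C ⊗[k] C)
    (hΔ : Δ.toLinearMap ∘ₗ lam
      = ((TensorProduct.map σ₁ lam + TensorProduct.map lam σ₂) ∘ₗ τ.toLinearMap)
          ∘ₗ (PiTensorProduct.map fun _ : Fin n => Δ.toLinearMap))
    -- `ε ∘ σᵢ = ε^{⊗n}`
    (hσ₁ε : ∀ x : Fin n → C, ε (σ₁ (tprod k x)) = ∏ j, ε (x j))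
    (hσ₂ε : ∀ x : Fin n → C, ε (σ₂ (tprod k x)) = ∏ j, ε (x j))
    -- `Δ ∘ σᵢ = (σᵢ ⊗ σᵢ) ∘ τ ∘ Δ^{⊗n}`
    (hσ₁Δ : Δ.toLinearMap ∘ₗ σ₁
      = (TensorProduct.map σ₁ σ₁) ∘ₗ τ.toLinearMap
          ∘ₗ (PiTensorProduct.map fun _ : Fin n => Δ.toLinearMap))
    (hσ₂Δ : Δ.toLinearMap ∘ₗ σ₂
      = (TensorProduct.map σ₂ σ₂) ∘ₗ τ.toLinearMap
          ∘ₗ (PiTensorProduct.map fun _ : Fin n => Δ.toLinearMap)) :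
    ∃! p : (C →ₐ[k] C ⊗[k] C) × (C →ₐ[k] k),
      -- `Δ ∘ λ = (σ₁, σ₂) ∘ Δ^{⊗n}`
      (p.1.toLinearMap ∘ₗ lam
        = ((TensorProduct.map σ₁ lam + TensorProduct.map lam σ₂) ∘ₗ τ.toLinearMap)
            ∘ₗ (PiTensorProduct.map fun _ : Fin n => p.1.toLinearMap)) ∧
      -- `ε ∘ λ = 0`
      (p.2.toLinearMap ∘ₗ lam = 0) ∧
      -- coassociativity
      ((TensorProduct.assoc k C C C).toLinearMap
          ∘ₗ (TensorProduct.map p.1.toLinearMap LinearMap.id) ∘ₗ p.1.toLinearMap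
        = (TensorProduct.map LinearMap.id p.1.toLinearMap) ∘ₗ p.1.toLinearMap) ∧
      -- counit laws
      ((TensorProduct.lid k C).toLinearMap
          ∘ₗ (TensorProduct.map p.2.toLinearMap LinearMap.id) ∘ₗ p.1.toLinearMap
        = LinearMap.id) ∧
      ((TensorProduct.rid k C).toLinearMap
          ∘ₗ (TensorProduct.map LinearMap.id p.2.toLinearMap) ∘ₗ p.1.toLinearMap
        = LinearMap.id) := by
    classical
  set P₁ : (⨂[k]^n C) →ₗ[k] ⨂[k]^n (C ⊗[k] C) :=
    PiTensorProduct.map (fun _ : Fin n => Δ.toLinearMap) with hP₁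
  set Lβ : (⨂[k]^n (C ⊗[k] C)) →ₗ[k] C ⊗[k] C :=
    (TensorProduct.map σ₁ lam + TensorProduct.map lam σ₂) ∘ₗ τ.toLinearMap with hLβ
  have hτ' : ∀ (a b : Fin n → C),
      τ.toLinearMap (tprod k fun i => a i ⊗ₜ[k] b i) = (tprod k a) ⊗ₜ[k] (tprod k b) := by
    intro a b; simpa using hτ a b
  have hLβ_app : ∀ (a b : Fin n → C),
      Lβ (tprod k fun i => a i ⊗ₜ[k] b i)
        = σ₁ (tprod k a) ⊗ₜ[k] lam (tprod k b) + lam (tprod k a) ⊗ₜ[k] σ₂ (tprod k b) := by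
    intro a b
    rw [hLβ, LinearMap.comp_apply, hτ' a b, LinearMap.add_apply,
      TensorProduct.map_tmul, TensorProduct.map_tmul]
  have hP₁_app : ∀ (x : Fin n → C), P₁ (tprod k x) = tprod k (fun i => Δ (x i)) := by
    intro x; rw [hP₁, PiTensorProduct.map_tprod]; rfl
  have hΔc : ∀ z, Δ.toLinearMap (lam z) = Lβ (P₁ z) := fun z => LinearMap.congr_fun hΔ z
  have hσ₁Δc : ∀ z, Δ.toLinearMap (σ₁ z) = TensorProduct.map σ₁ σ₁ (τ (P₁ z)) := by
    intro z; simpa using LinearMap.congr_fun hσ₁Δ z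
  have hσ₂Δc : ∀ z, Δ.toLinearMap (σ₂ z) = TensorProduct.map σ₂ σ₂ (τ (P₁ z)) := by
    intro z; simpa using LinearMap.congr_fun hσ₂Δ z
  have hεlam : ∀ z, ε (lam z) = 0 := by
    intro z; simpa using LinearMap.congr_fun hε z
  -- the unique endomorphism
  obtain ⟨fC, _, hfCu⟩ := hinit C inferInstance inferInstance lam
  have hid_morph : lam ∘ₗ PiTensorProduct.map (fun _ : Fin n => (AlgHom.id k C).toLinearMap)
      = (AlgHom.id k C).toLinearMap ∘ₗ lam := by
    rw [show (fun _ : Fin n => (AlgHom.id k C).toLinearMap)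
        = fun _ : Fin n => (LinearMap.id : C →ₗ[k] C) from rfl, PiTensorProduct.map_id]
    rfl
  -- ===== left counit =====
  set gL : C ⊗[k] C →ₗ[k] C :=
    (TensorProduct.lid k C).toLinearMap ∘ₗ TensorProduct.map ε.toLinearMap LinearMap.id with hgL
  have hgL_app : ∀ (x y : C), gL (x ⊗ₜ[k] y) = ε x • y := by
    intro x y; rw [hgL]; simp
  set FL : C →ₐ[k] C := ((Algebra.TensorProduct.lid k C).toAlgHom.comp
    ((Algebra.TensorProduct.map ε (AlgHom.id k C)).comp Δ)) with hFL
  have hFLlin : FL.toLinearMap = gL ∘ₗ Δ.toLinearMap := by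
    refine LinearMap.ext fun x => ?_
    have : ∀ z : C ⊗[k] C,
        (Algebra.TensorProduct.lid k C) ((Algebra.TensorProduct.map ε (AlgHom.id k C)) z)
          = gL z := by
      intro z
      induction z using TensorProduct.induction_on with
      | zero => simp
      | tmul x y => rw [Algebra.TensorProduct.map_tmul, hgL_app]; simp
      | add u v hu hv => simp only [map_add, hu, hv]
    rw [hFL]; exact this (Δ x)
  have keyL : gL ∘ₗ Lβ = lam ∘ₗ PiTensorProduct.map (fun _ : Fin n => gL) := by
    refine UBAux.ext_simple fun a b => ?_
    have hRHS : (lam ∘ₗ PiTensorProduct.map fun _ : Fin n => gL)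
        (tprod k fun i => a i ⊗ₜ[k] b i) = (∏ j, ε (a j)) • lam (tprod k b) := by
      simp only [LinearMap.comp_apply, PiTensorProduct.map_tprod]
      have h2 : (fun i => gL (a i ⊗ₜ[k] b i)) = fun i => ε (a i) • b i :=
        funext fun i => hgL_app _ _
      rw [h2, MultilinearMap.map_smul_univ, map_smul]
    have hLHS : (gL ∘ₗ Lβ) (tprod k fun i => a i ⊗ₜ[k] b i)
        = (∏ j, ε (a j)) • lam (tprod k b) := by
      rw [LinearMap.comp_apply, hLβ_app a b, map_add, hgL_app, hgL_app, hσ₁ε,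
        hεlam, zero_smul, add_zero]
    rw [hRHS, hLHS]
  have hmorphL : lam ∘ₗ PiTensorProduct.map (fun _ : Fin n => FL.toLinearMap)
      = FL.toLinearMap ∘ₗ lam := by
    refine LinearMap.ext fun z => ?_
    have hsplit : (PiTensorProduct.map fun _ : Fin n => gL ∘ₗ Δ.toLinearMap) z
        = (PiTensorProduct.map fun _ : Fin n => gL) (P₁ z) := by
      rw [hP₁]; exact LinearMap.congr_fun (PiTensorProduct.map_comp _ _) z
    simp only [LinearMap.comp_apply, hFLlin, hsplit]
    have hk := LinearMap.congr_fun keyL (P₁ z)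
    simp only [LinearMap.comp_apply] at hk
    rw [← hk, ← hΔc z]
  have hFL_id : FL = AlgHom.id k C := by rw [hfCu FL hmorphL, hfCu (AlgHom.id k C) hid_morph]
  have counitL : (TensorProduct.lid k C).toLinearMap
      ∘ₗ (TensorProduct.map ε.toLinearMap LinearMap.id) ∘ₗ Δ.toLinearMap = LinearMap.id := by
    refine LinearMap.ext fun x => ?_
    have h1 := LinearMap.congr_fun (congrArg AlgHom.toLinearMap hFL_id) x
    rw [hFLlin, hgL] at h1
    simpa using h1
  -- ===== right counit =====
  set gR : C ⊗[k] C →ₗ[k] C :=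
    (TensorProduct.rid k C).toLinearMap ∘ₗ TensorProduct.map LinearMap.id ε.toLinearMap with hgR
  have hgR_app : ∀ (x y : C), gR (x ⊗ₜ[k] y) = ε y • x := by
    intro x y; rw [hgR]; simp
  set FR : C →ₐ[k] C := ((Algebra.TensorProduct.rid k k C).toAlgHom.comp
    ((Algebra.TensorProduct.map (AlgHom.id k C) ε).comp Δ)) with hFR
  have hFRlin : FR.toLinearMap = gR ∘ₗ Δ.toLinearMap := by
    refine LinearMap.ext fun x => ?_
    have : ∀ z : C ⊗[k] C,
        (Algebra.TensorProduct.rid k k C) ((Algebra.TensorProduct.map (AlgHom.id k C) ε) z)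
          = gR z := by
      intro z
      induction z using TensorProduct.induction_on with
      | zero => simp
      | tmul x y => rw [Algebra.TensorProduct.map_tmul, hgR_app]; simp
      | add u v hu hv => simp only [map_add, hu, hv]
    rw [hFR]; exact this (Δ x)
  have keyR : gR ∘ₗ Lβ = lam ∘ₗ PiTensorProduct.map (fun _ : Fin n => gR) := by
    refine UBAux.ext_simple fun a b => ?_
    have hRHS : (lam ∘ₗ PiTensorProduct.map fun _ : Fin n => gR)
        (tprod k fun i => a i ⊗ₜ[k] b i) = (∏ j, ε (b j)) • lam (tprod k a) := by
      simp only [LinearMap.comp_apply, PiTensorProduct.map_tprod]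
      have h2 : (fun i => gR (a i ⊗ₜ[k] b i)) = fun i => ε (b i) • a i :=
        funext fun i => hgR_app _ _
      rw [h2, MultilinearMap.map_smul_univ, map_smul]
    have hLHS : (gR ∘ₗ Lβ) (tprod k fun i => a i ⊗ₜ[k] b i)
        = (∏ j, ε (b j)) • lam (tprod k a) := by
      rw [LinearMap.comp_apply, hLβ_app a b, map_add, hgR_app, hgR_app, hσ₂ε,
        hεlam, zero_smul, zero_add]
    rw [hRHS, hLHS]
  have hmorphR : lam ∘ₗ PiTensorProduct.map (fun _ : Fin n => FR.toLinearMap)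
      = FR.toLinearMap ∘ₗ lam := by
    refine LinearMap.ext fun z => ?_
    have hsplit : (PiTensorProduct.map fun _ : Fin n => gR ∘ₗ Δ.toLinearMap) z
        = (PiTensorProduct.map fun _ : Fin n => gR) (P₁ z) := by
      rw [hP₁]; exact LinearMap.congr_fun (PiTensorProduct.map_comp _ _) z
    simp only [LinearMap.comp_apply, hFRlin, hsplit]
    have hk := LinearMap.congr_fun keyR (P₁ z)
    simp only [LinearMap.comp_apply] at hk
    rw [← hk, ← hΔc z]
  have hFR_id : FR = AlgHom.id k C := by rw [hfCu FR hmorphR, hfCu (AlgHom.id k C) hid_morph]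
  have counitR : (TensorProduct.rid k C).toLinearMap
      ∘ₗ (TensorProduct.map LinearMap.id ε.toLinearMap) ∘ₗ Δ.toLinearMap = LinearMap.id := by
    refine LinearMap.ext fun x => ?_
    have h1 := LinearMap.congr_fun (congrArg AlgHom.toLinearMap hFR_id) x
    rw [hFRlin, hgR] at h1
    simpa using h1
  -- ===== coassociativity =====
  set s1 : (⨂[k]^n (C ⊗[k] C)) →ₗ[k] C ⊗[k] C :=
    TensorProduct.map σ₁ σ₁ ∘ₗ τ.toLinearMap with hs1
  set s2 : (⨂[k]^n (C ⊗[k] C)) →ₗ[k] C ⊗[k] C :=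
    TensorProduct.map σ₂ σ₂ ∘ₗ τ.toLinearMap with hs2
  have hs1_app : ∀ (a b : Fin n → C),
      s1 (tprod k fun i => a i ⊗ₜ[k] b i) = σ₁ (tprod k a) ⊗ₜ[k] σ₁ (tprod k b) := by
    intro a b; rw [hs1, LinearMap.comp_apply, hτ', TensorProduct.map_tmul]
  have hs2_app : ∀ (a b : Fin n → C),
      s2 (tprod k fun i => a i ⊗ₜ[k] b i) = σ₂ (tprod k a) ⊗ₜ[k] σ₂ (tprod k b) := by
    intro a b; rw [hs2, LinearMap.comp_apply, hτ', TensorProduct.map_tmul]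
  have hs1P : ∀ z, s1 (P₁ z) = Δ.toLinearMap (σ₁ z) := by
    intro z; rw [hs1, LinearMap.comp_apply, hσ₁Δc z]; rfl
  have hs2P : ∀ z, s2 (P₁ z) = Δ.toLinearMap (σ₂ z) := by
    intro z; rw [hs2, LinearMap.comp_apply, hσ₂Δc z]; rfl
  set sp₁ : (⨂[k]^n (C ⊗[k] (C ⊗[k] C))) →ₗ[k] (⨂[k]^n C) ⊗[k] (⨂[k]^n (C ⊗[k] C)) :=
    UBAux.sep k n C (C ⊗[k] C) with hsp₁
  set sp₂ : (⨂[k]^n ((C ⊗[k] C) ⊗[k] C)) →ₗ[k] (⨂[k]^n (C ⊗[k] C)) ⊗[k] (⨂[k]^n C) :=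
    UBAux.sep k n (C ⊗[k] C) C with hsp₂
  set γ : (⨂[k]^n (C ⊗[k] (C ⊗[k] C))) →ₗ[k] C ⊗[k] (C ⊗[k] C) :=
    (TensorProduct.map σ₁ Lβ + TensorProduct.map lam s2) ∘ₗ sp₁ with hγ
  have hγ_app : ∀ (a : Fin n → C) (w : Fin n → C ⊗[k] C),
      γ (tprod k fun i => a i ⊗ₜ[k] w i)
        = σ₁ (tprod k a) ⊗ₜ[k] Lβ (tprod k w) + lam (tprod k a) ⊗ₜ[k] s2 (tprod k w) := by
    intro a w
    rw [hγ, LinearMap.comp_apply, hsp₁, UBAux.sep_tprod, LinearMap.add_apply,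
      TensorProduct.map_tmul, TensorProduct.map_tmul]
  set Al : ((C ⊗[k] C) ⊗[k] C) →ₗ[k] (C ⊗[k] (C ⊗[k] C)) :=
    (TensorProduct.assoc k C C C).toLinearMap with hAl
  set D₁ : (C ⊗[k] C) →ₗ[k] ((C ⊗[k] C) ⊗[k] C) :=
    TensorProduct.map Δ.toLinearMap LinearMap.id with hD₁
  set D₂ : (C ⊗[k] C) →ₗ[k] (C ⊗[k] (C ⊗[k] C)) :=
    TensorProduct.map LinearMap.id Δ.toLinearMap with hD₂
  have hD₁_app : ∀ (x y : C), D₁ (x ⊗ₜ[k] y) = Δ x ⊗ₜ[k] y := by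
    intro x y; rw [hD₁, TensorProduct.map_tmul]; rfl
  have hD₂_app : ∀ (x y : C), D₂ (x ⊗ₜ[k] y) = x ⊗ₜ[k] Δ y := by
    intro x y; rw [hD₂, TensorProduct.map_tmul]; rfl
  -- key identities
  have keyG : γ ∘ₗ PiTensorProduct.map (fun _ : Fin n => D₂) = D₂ ∘ₗ Lβ := by
    refine UBAux.ext_simple fun a b => ?_
    have hL : (γ ∘ₗ PiTensorProduct.map fun _ : Fin n => D₂)
        (tprod k fun i => a i ⊗ₜ[k] b i)
        = σ₁ (tprod k a) ⊗ₜ[k] Δ.toLinearMap (lam (tprod k b))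
          + lam (tprod k a) ⊗ₜ[k] Δ.toLinearMap (σ₂ (tprod k b)) := by
      simp only [LinearMap.comp_apply, PiTensorProduct.map_tprod]
      have h2 : (fun i => D₂ (a i ⊗ₜ[k] b i)) = fun i => a i ⊗ₜ[k] Δ (b i) :=
        funext fun i => hD₂_app _ _
      rw [h2, hγ_app a (fun i => Δ (b i)), ← hP₁_app b, hΔc, hs2P]
    have hR : (D₂ ∘ₗ Lβ) (tprod k fun i => a i ⊗ₜ[k] b i)
        = σ₁ (tprod k a) ⊗ₜ[k] Δ.toLinearMap (lam (tprod k b))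
          + lam (tprod k a) ⊗ₜ[k] Δ.toLinearMap (σ₂ (tprod k b)) := by
      rw [LinearMap.comp_apply, hLβ_app a b, map_add, hD₂_app, hD₂_app]; rfl
    rw [hL, hR]
  have keyF1 : γ ∘ₗ PiTensorProduct.map (fun _ : Fin n => Al)
      = Al ∘ₗ ((TensorProduct.map s1 lam + TensorProduct.map Lβ σ₂) ∘ₗ sp₂) := by
    refine UBAux.ext_triple fun c d b => ?_
    have hL : (γ ∘ₗ PiTensorProduct.map fun _ : Fin n => Al)
        (tprod k fun i => (c i ⊗ₜ[k] d i) ⊗ₜ[k] b i)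
        = σ₁ (tprod k c) ⊗ₜ[k] (σ₁ (tprod k d) ⊗ₜ[k] lam (tprod k b))
          + σ₁ (tprod k c) ⊗ₜ[k] (lam (tprod k d) ⊗ₜ[k] σ₂ (tprod k b))
          + lam (tprod k c) ⊗ₜ[k] (σ₂ (tprod k d) ⊗ₜ[k] σ₂ (tprod k b)) := by
      simp only [LinearMap.comp_apply, PiTensorProduct.map_tprod]
      have h2 : (fun i => Al ((c i ⊗ₜ[k] d i) ⊗ₜ[k] b i))
          = fun i => c i ⊗ₜ[k] (d i ⊗ₜ[k] b i) := by
        refine funext fun i => ?_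
        rw [hAl]; exact TensorProduct.assoc_tmul _ _ _
      rw [h2, hγ_app c (fun i => d i ⊗ₜ[k] b i), hLβ_app d b, hs2_app d b,
        TensorProduct.tmul_add]
    have hR : (Al ∘ₗ ((TensorProduct.map s1 lam + TensorProduct.map Lβ σ₂) ∘ₗ sp₂))
        (tprod k fun i => (c i ⊗ₜ[k] d i) ⊗ₜ[k] b i)
        = σ₁ (tprod k c) ⊗ₜ[k] (σ₁ (tprod k d) ⊗ₜ[k] lam (tprod k b))
          + (σ₁ (tprod k c) ⊗ₜ[k] (lam (tprod k d) ⊗ₜ[k] σ₂ (tprod k b))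
          + lam (tprod k c) ⊗ₜ[k] (σ₂ (tprod k d) ⊗ₜ[k] σ₂ (tprod k b))) := by
      simp only [LinearMap.comp_apply]
      rw [hsp₂, UBAux.sep_tprod (a := fun i => c i ⊗ₜ[k] d i) (b := b),
        LinearMap.add_apply, TensorProduct.map_tmul, TensorProduct.map_tmul,
        hs1_app c d, hLβ_app c d, TensorProduct.add_tmul, map_add]
      simp only [hAl, LinearEquiv.coe_coe, map_add, TensorProduct.assoc_tmul]
    rw [hL, hR, add_assoc]
  have keyF2 : sp₂ ∘ₗ PiTensorProduct.map (fun _ : Fin n => D₁)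
      = TensorProduct.map P₁ LinearMap.id ∘ₗ τ.toLinearMap := by
    refine UBAux.ext_simple (M := C) (N := C)
      (P := (⨂[k]^n (C ⊗[k] C)) ⊗[k] (⨂[k]^n C)) fun a b => ?_
    have hL : (sp₂ ∘ₗ PiTensorProduct.map fun _ : Fin n => D₁)
        (tprod k fun i => a i ⊗ₜ[k] b i)
        = (tprod k fun i => Δ (a i)) ⊗ₜ[k] tprod k b := by
      simp only [LinearMap.comp_apply, PiTensorProduct.map_tprod]
      have h2 : (fun i => D₁ (a i ⊗ₜ[k] b i)) = fun i => Δ (a i) ⊗ₜ[k] b i :=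
        funext fun i => hD₁_app _ _
      rw [h2, hsp₂, UBAux.sep_tprod]
    have hR : (TensorProduct.map P₁ LinearMap.id ∘ₗ τ.toLinearMap)
        (tprod k fun i => a i ⊗ₜ[k] b i)
        = (tprod k fun i => Δ (a i)) ⊗ₜ[k] tprod k b := by
      rw [LinearMap.comp_apply, hτ', TensorProduct.map_tmul, hP₁_app]; rfl
    rw [hL, hR]
  have keyF3 : (TensorProduct.map s1 lam + TensorProduct.map Lβ σ₂)
      ∘ₗ (TensorProduct.map P₁ LinearMap.id ∘ₗ τ.toLinearMap) = D₁ ∘ₗ Lβ := by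
    refine UBAux.ext_simple fun a b => ?_
    have hL : ((TensorProduct.map s1 lam + TensorProduct.map Lβ σ₂)
        ∘ₗ (TensorProduct.map P₁ LinearMap.id ∘ₗ τ.toLinearMap))
        (tprod k fun i => a i ⊗ₜ[k] b i)
        = Δ.toLinearMap (σ₁ (tprod k a)) ⊗ₜ[k] lam (tprod k b)
          + Δ.toLinearMap (lam (tprod k a)) ⊗ₜ[k] σ₂ (tprod k b) := by
      simp only [LinearMap.comp_apply]
      rw [hτ', TensorProduct.map_tmul, LinearMap.add_apply, TensorProduct.map_tmul,
        TensorProduct.map_tmul, hs1P, ← hΔc]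
      rfl
    have hR : (D₁ ∘ₗ Lβ) (tprod k fun i => a i ⊗ₜ[k] b i)
        = Δ.toLinearMap (σ₁ (tprod k a)) ⊗ₜ[k] lam (tprod k b)
          + Δ.toLinearMap (lam (tprod k a)) ⊗ₜ[k] σ₂ (tprod k b) := by
      rw [LinearMap.comp_apply, hLβ_app a b, map_add, hD₁_app, hD₁_app]; rfl
    rw [hL, hR]
  -- the two coassociativity candidates
  set GA : C →ₐ[k] C ⊗[k] (C ⊗[k] C) :=
    (Algebra.TensorProduct.map (AlgHom.id k C) Δ).comp Δ with hGA
  set FA : C →ₐ[k] C ⊗[k] (C ⊗[k] C) :=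
    (Algebra.TensorProduct.assoc k k k C C C).toAlgHom.comp
      ((Algebra.TensorProduct.map Δ (AlgHom.id k C)).comp Δ) with hFA
  have hGAlin : GA.toLinearMap = D₂ ∘ₗ Δ.toLinearMap := by
    refine LinearMap.ext fun x => ?_
    have : ∀ z : C ⊗[k] C, (Algebra.TensorProduct.map (AlgHom.id k C) Δ) z = D₂ z := by
      intro z
      induction z using TensorProduct.induction_on with
      | zero => simp
      | tmul x y => rw [Algebra.TensorProduct.map_tmul, hD₂_app]; rfl
      | add u v hu hv => simp only [map_add, hu, hv]
    rw [hGA]; exact this (Δ x)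
  have hFAlin : FA.toLinearMap = Al ∘ₗ D₁ ∘ₗ Δ.toLinearMap := by
    refine LinearMap.ext fun x => ?_
    have hone : ∀ z : C ⊗[k] C, (Algebra.TensorProduct.map Δ (AlgHom.id k C)) z = D₁ z := by
      intro z
      induction z using TensorProduct.induction_on with
      | zero => simp
      | tmul x y => rw [Algebra.TensorProduct.map_tmul, hD₁_app]; rfl
      | add u v hu hv => simp only [map_add, hu, hv]
    have htwo : ∀ w : (C ⊗[k] C) ⊗[k] C, (Algebra.TensorProduct.assoc k k k C C C) w = Al w := by
      intro w
      induction w using TensorProduct.induction_on with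
      | zero => simp
      | tmul u c =>
          induction u using TensorProduct.induction_on with
          | zero => simp
          | tmul x y =>
              rw [Algebra.TensorProduct.assoc_tmul, hAl]
              exact (TensorProduct.assoc_tmul _ _ _).symm
          | add u v hu hv =>
              rw [TensorProduct.add_tmul, map_add, map_add, hu, hv]
      | add u v hu hv => simp only [map_add, hu, hv]
    have := htwo ((Algebra.TensorProduct.map Δ (AlgHom.id k C)) (Δ x))
    rw [hone (Δ x)] at this
    rw [hFA]; exact (congrArg (Algebra.TensorProduct.assoc k k k C C C) (hone (Δ x))).trans this
  have hmorphG : γ ∘ₗ PiTensorProduct.map (fun _ : Fin n => GA.toLinearMap)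
      = GA.toLinearMap ∘ₗ lam := by
    refine LinearMap.ext fun z => ?_
    have hsplit : (PiTensorProduct.map fun _ : Fin n => D₂ ∘ₗ Δ.toLinearMap) z
        = (PiTensorProduct.map fun _ : Fin n => D₂) (P₁ z) := by
      rw [hP₁]; exact LinearMap.congr_fun (PiTensorProduct.map_comp _ _) z
    simp only [LinearMap.comp_apply, hGAlin, hsplit]
    have hk := LinearMap.congr_fun keyG (P₁ z)
    simp only [LinearMap.comp_apply] at hk
    rw [hk, ← hΔc z]
  have hmorphF : γ ∘ₗ PiTensorProduct.map (fun _ : Fin n => FA.toLinearMap)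
      = FA.toLinearMap ∘ₗ lam := by
    refine LinearMap.ext fun z => ?_
    have hsplit : (PiTensorProduct.map fun _ : Fin n => Al ∘ₗ D₁ ∘ₗ Δ.toLinearMap) z
        = (PiTensorProduct.map fun _ : Fin n => Al)
            ((PiTensorProduct.map fun _ : Fin n => D₁) (P₁ z)) := by
      rw [hP₁]
      have e1 : (PiTensorProduct.map fun _ : Fin n => Al ∘ₗ D₁ ∘ₗ Δ.toLinearMap)
          = (PiTensorProduct.map fun _ : Fin n => Al)
            ∘ₗ PiTensorProduct.map (fun _ : Fin n => D₁ ∘ₗ Δ.toLinearMap) :=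
        PiTensorProduct.map_comp _ _
      have e2 : (PiTensorProduct.map fun _ : Fin n => D₁ ∘ₗ Δ.toLinearMap)
          = (PiTensorProduct.map fun _ : Fin n => D₁)
            ∘ₗ PiTensorProduct.map (fun _ : Fin n => Δ.toLinearMap) :=
        PiTensorProduct.map_comp _ _
      rw [e1, e2]; rfl
    simp only [LinearMap.comp_apply, hFAlin, hsplit]
    have hk1 := LinearMap.congr_fun keyF1 ((PiTensorProduct.map fun _ : Fin n => D₁) (P₁ z))
    simp only [LinearMap.comp_apply] at hk1
    rw [hk1]
    have hk2 := LinearMap.congr_fun keyF2 (P₁ z)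
    simp only [LinearMap.comp_apply] at hk2
    rw [hk2]
    have hk3 := LinearMap.congr_fun keyF3 (P₁ z)
    simp only [LinearMap.comp_apply] at hk3
    rw [hk3, ← hΔc z]
  obtain ⟨fT, _, hfTu⟩ := hinit (C ⊗[k] (C ⊗[k] C)) inferInstance inferInstance γ
  have hFG : FA = GA := (hfTu FA hmorphF).trans (hfTu GA hmorphG).symm
  have coassoc : (TensorProduct.assoc k C C C).toLinearMap
      ∘ₗ (TensorProduct.map Δ.toLinearMap LinearMap.id) ∘ₗ Δ.toLinearMap
      = (TensorProduct.map LinearMap.id Δ.toLinearMap) ∘ₗ Δ.toLinearMap := by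
    have h := congrArg AlgHom.toLinearMap hFG
    rw [hFAlin, hGAlin] at h
    exact h
  -- ===== conclusion =====
  refine ⟨(Δ, ε), ⟨hΔ, hε, coassoc, counitL, counitR⟩, ?_⟩
  rintro ⟨Δ', ε'⟩ ⟨h1, h2, -, -, -⟩
  obtain ⟨f, _, hfu⟩ := hinit (C ⊗[k] C) inferInstance inferInstance Lβ
  obtain ⟨f₀, _, hf₀u⟩ := hinit k inferInstance inferInstance 0
  have e1 : Δ' = Δ := by
    rw [hfu Δ' h1.symm, hfu Δ hΔ.symm]
  have e2 : ε' = ε := by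
    have hh2 : (0 : (⨂[k]^n k) →ₗ[k] k)
        ∘ₗ PiTensorProduct.map (fun _ : Fin n => ε'.toLinearMap) = ε'.toLinearMap ∘ₗ lam := by
      rw [LinearMap.zero_comp]; exact h2.symm
    have hhε : (0 : (⨂[k]^n k) →ₗ[k] k)
        ∘ₗ PiTensorProduct.map (fun _ : Fin n => ε.toLinearMap) = ε.toLinearMap ∘ₗ lam := by
      rw [LinearMap.zero_comp]; exact hε.symm
    rw [hf₀u ε' hh2, hf₀u ε hhε]
  simp [e1, e2]
end

section
/- The initial commutative n-algebras C_n, for varying n, form a simplicial algebra: the algebra homomorphisms d_i : C_n → C_{n−1} (0 ≤ i ≤ n) determined by d_0(λ_n)(x_1,…,x_n) = μ(x_1, λ_{n−1}(x_2,…,x_n)), d_i(λ_n)(x_1,…,x_n) = λ_{n−1}(x_1,…,μ(x_i,x_{i+1}),…,x_n) for 1 ≤ i ≤ n−1, d_n(λ_n)(x_1,…,x_n) = μ(λ_{n−1}(x_1,…,x_{n−1}), x_n), and the algebra homomorphisms s_i : C_n → C_{n+1} (0 ≤ i ≤ n) determined by s_i(λ_n)(x_1,…,x_n) = λ_{n+1}(x_1,…,x_i,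 1, x_{i+1},…,x_n), satisfy the simplicial identities. -/
open scoped TensorProduct

namespace SimplicialAux

open PiTensorProduct Finset

variable {k : Type} [CommRing k] {A : Type} [CommRing A] [Algebra k A]

noncomputable def patML {N M : ℕ} (op : (⨂[k]^M A) →ₗ[k] A) (g : Fin N → Option (Fin M)) :
    MultilinearMap k (fun _ : Fin N => A) A where
  toFun y := (∏ j ∈ univ.filter (fun j => g j = none), y j)
    * op (tprod k fun l => ∏ j ∈ univ.filter (fun j => g j = some l), y j)
  map_update_add' := by
    intro _ y i a b
    rcases h : g i with _ | l₀
    · have hmem : i ∈ univ.filter (fun j => g j = none) := by simp [h]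
      have hblk : ∀ (c : A) (l : Fin M),
          (∏ j ∈ univ.filter (fun j => g j = some l), Function.update y i c j)
            = ∏ j ∈ univ.filter (fun j => g j = some l), y j := by
        intro c l
        exact Finset.prod_update_of_notMem (by simp [h]) _ _
      simp only [Finset.prod_update_of_mem hmem, hblk]
      ring
    · have hout : ∀ (c : A),
          (∏ j ∈ univ.filter (fun j => g j = none), Function.update y i c j)
            = ∏ j ∈ univ.filter (fun j => g j = none), y j := by
        intro c
        exact Finset.prod_update_of_notMem (by simp [h]) _ _
      have hmem : i ∈ univ.filter (fun j => g j = some l₀) := by simp [h]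
      have hblk : ∀ (c : A),
          (fun l => ∏ j ∈ univ.filter (fun j => g j = some l), Function.update y i c j)
            = Function.update
                (fun l => ∏ j ∈ univ.filter (fun j => g j = some l), y j) l₀
                (c * ∏ j ∈ (univ.filter (fun j => g j = some l₀)) \ {i}, y j) := by
        intro c
        funext l
        by_cases hl : l = l₀
        · subst hl
          rw [Function.update_self, Finset.prod_update_of_mem hmem]
        · rw [Function.update_of_ne hl]
          exact Finset.prod_update_of_notMem (by simp [h]; exact fun e => hl e.symm) _ _
      simp only [hout, hblk, add_mul, MultilinearMap.map_update_add, map_add, mul_add]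
  map_update_smul' := by
    intro _ y i c a
    rcases h : g i with _ | l₀
    · have hmem : i ∈ univ.filter (fun j => g j = none) := by simp [h]
      have hblk : ∀ (b : A) (l : Fin M),
          (∏ j ∈ univ.filter (fun j => g j = some l), Function.update y i b j)
            = ∏ j ∈ univ.filter (fun j => g j = some l), y j := by
        intro b l
        exact Finset.prod_update_of_notMem (by simp [h]) _ _
      simp only [Finset.prod_update_of_mem hmem, hblk, smul_mul_assoc]
    · have hout : ∀ (b : A),
          (∏ j ∈ univ.filter (fun j => g j = none), Function.update y i b j)
            = ∏ j ∈ univ.filter (fun j => g j = none), y j := by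
        intro b
        exact Finset.prod_update_of_notMem (by simp [h]) _ _
      have hmem : i ∈ univ.filter (fun j => g j = some l₀) := by simp [h]
      have hblk : ∀ (b : A),
          (fun l => ∏ j ∈ univ.filter (fun j => g j = some l), Function.update y i b j)
            = Function.update
                (fun l => ∏ j ∈ univ.filter (fun j => g j = some l), y j) l₀
                (b * ∏ j ∈ (univ.filter (fun j => g j = some l₀)) \ {i}, y j) := by
        intro b
        funext l
        by_cases hl : l = l₀
        · subst hl
          rw [Function.update_self, Finset.prod_update_of_mem hmem]
        · rw [Function.update_of_ne hl]
          exact Finset.prod_update_of_notMem (by simp [h]; exact fun e => hl e.symm) _ _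
      simp only [hout, hblk, smul_mul_assoc, MultilinearMap.map_update_smul, map_smul,
        mul_smul_comm]

lemma patML_apply {N M : ℕ} (op : (⨂[k]^M A) →ₗ[k] A) (g : Fin N → Option (Fin M))
    (y : Fin N → A) :
    patML op g y = (∏ j ∈ univ.filter (fun j => g j = none), y j)
      * op (tprod k fun l => ∏ j ∈ univ.filter (fun j => g j = some l), y j) := rfl

lemma prod_bind_some {N M P : ℕ} (g₁ : Fin N → Option (Fin M)) (g₂ : Fin M → Option (Fin P))
    (z : Fin N → A) (p : Fin P) :
    ∏ j ∈ univ.filter (fun j => (g₁ j).bind g₂ = some p), z j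
      = ∏ l ∈ univ.filter (fun l => g₂ l = some p),
          ∏ j ∈ univ.filter (fun j => g₁ j = some l), z j := by
  rw [← Finset.prod_biUnion]
  · apply Finset.prod_congr _ (fun _ _ => rfl)
    ext j
    rcases hg : g₁ j with _ | l <;> simp [Finset.mem_biUnion, hg, eq_comm]
  · intro a _ b _ hab
    simp only [Finset.disjoint_left, Finset.mem_filter]
    rintro j ⟨-, hj⟩ ⟨-, hj'⟩
    exact hab (by rw [hj] at hj'; exact Option.some.inj hj')

lemma prod_bind_none {N M P : ℕ} (g₁ : Fin N → Option (Fin M)) (g₂ : Fin M → Option (Fin P))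
    (z : Fin N → A) :
    ∏ j ∈ univ.filter (fun j => (g₁ j).bind g₂ = none), z j
      = (∏ j ∈ univ.filter (fun j => g₁ j = none), z j)
        * ∏ l ∈ univ.filter (fun l => g₂ l = none),
            ∏ j ∈ univ.filter (fun j => g₁ j = some l), z j := by
  rw [← Finset.prod_biUnion, ← Finset.prod_union]
  · apply Finset.prod_congr _ (fun _ _ => rfl)
    ext j
    rcases hg : g₁ j with _ | l <;>
      simp [Finset.mem_union, Finset.mem_biUnion, hg, eq_comm]
  · simp only [Finset.disjoint_left, Finset.mem_filter, Finset.mem_biUnion]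
    rintro j ⟨-, hj⟩ ⟨l, -, -, hj'⟩
    rw [hj] at hj'; exact nomatch hj'
  · intro a _ b _ hab
    simp only [Finset.disjoint_left, Finset.mem_filter]
    rintro j ⟨-, hj⟩ ⟨-, hj'⟩
    exact hab (by rw [hj] at hj'; exact Option.some.inj hj')

def Compat {N M : ℕ} (CN : CommNAlgebra k N) (CM : CommNAlgebra k M)
    (f : CN.carrier →ₐ[k] CM.carrier) (g : Fin N → Option (Fin M)) : Prop :=
  ∀ x : Fin N → CN.carrier,
    f (CN.op (tprod k x)) = patML CM.op g (fun j => f (x j))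

lemma Compat.comp {N M P : ℕ}
    {CN : CommNAlgebra k N} {CM : CommNAlgebra k M} {CP : CommNAlgebra k P}
    {f₂ : CM.carrier →ₐ[k] CP.carrier} {f₁ : CN.carrier →ₐ[k] CM.carrier}
    {g₂ : Fin M → Option (Fin P)} {g₁ : Fin N → Option (Fin M)}
    (h₂ : Compat CM CP f₂ g₂) (h₁ : Compat CN CM f₁ g₁) :
    Compat CN CP (f₂.comp f₁) (fun j => (g₁ j).bind g₂) := by
  intro x
  show f₂ (f₁ (CN.op (tprod k x))) = _
  rw [h₁, patML_apply, _root_.map_mul, map_prod, h₂, patML_apply, patML_apply]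
  have hB : ∀ l, f₂ (∏ j ∈ univ.filter (fun j => g₁ j = some l), f₁ (x j))
      = ∏ j ∈ univ.filter (fun j => g₁ j = some l), f₂ (f₁ (x j)) := fun l => map_prod _ _ _
  simp only [hB]
  simp only [AlgHom.comp_apply]
  rw [prod_bind_none g₁ g₂ (fun j => f₂ (f₁ (x j)))]
  have hT : (tprod k (s := fun _ : Fin P => CP.carrier)
        fun p => ∏ j ∈ univ.filter (fun j => (g₁ j).bind g₂ = some p), f₂ (f₁ (x j)))
      = tprod k fun p => ∏ l ∈ univ.filter (fun l => g₂ l = some p),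
          ∏ j ∈ univ.filter (fun j => g₁ j = some l), f₂ (f₁ (x j)) := by
    congr 1
    funext p
    exact prod_bind_some g₁ g₂ _ p
  rw [hT]
  ring

lemma compat_unique (C : (m : ℕ) → CommNAlgebra k m)
    (hinit : ∀ (m : ℕ) (A : CommNAlgebra k m), ∃! f : (C m).carrier →ₐ[k] A.carrier,
        A.op ∘ₗ (PiTensorProduct.map fun _ : Fin m => f.toLinearMap) = f.toLinearMap ∘ₗ (C m).op)
    {N M : ℕ} {f f' : (C N).carrier →ₐ[k] (C M).carrier} {g : Fin N → Option (Fin M)}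
    (hf : Compat (C N) (C M) f g) (hf' : Compat (C N) (C M) f' g) : f = f' := by
  obtain ⟨u, -, huniq⟩ := hinit N ⟨(C M).carrier, PiTensorProduct.lift (patML (C M).op g)⟩
  have key : ∀ f₀ : (C N).carrier →ₐ[k] (C M).carrier, Compat (C N) (C M) f₀ g →
      (PiTensorProduct.lift (patML (C M).op g)) ∘ₗ
          (PiTensorProduct.map fun _ : Fin N => f₀.toLinearMap)
        = f₀.toLinearMap ∘ₗ (C N).op := by
    intro f₀ h₀
    refine PiTensorProduct.ext (MultilinearMap.ext fun x => ?_)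
    simp only [LinearMap.compMultilinearMap_apply, LinearMap.comp_apply,
      PiTensorProduct.map_tprod, PiTensorProduct.lift.tprod, AlgHom.toLinearMap_apply]
    exact (h₀ x).symm
  exact (huniq f (key f hf)).trans (huniq f' (key f' hf')).symm

/-! ### Patterns -/

def gd (m i : ℕ) (p : Fin (m+1)) : Option (Fin m) :=
  if h : (p:ℕ) < i ∧ (p:ℕ) < m then some ⟨p, h.2⟩
  else if h' : ¬(p:ℕ) < i ∧ 1 ≤ (p:ℕ) then some ⟨(p:ℕ)-1, by have := p.isLt; have := h'; omega⟩
  else none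

def gs (m i : ℕ) (p : Fin m) : Option (Fin (m+1)) :=
  some (if (p:ℕ) < i then p.castSucc else p.succ)

def nd (m i : ℕ) (p : ℕ) : Option ℕ :=
  if p < i then (if p < m then some p else none) else (if 1 ≤ p then some (p-1) else none)

def ns (i : ℕ) (p : ℕ) : Option ℕ := some (if p < i then p else p+1)

lemma gd_val (m i : ℕ) (p : Fin (m+1)) : (gd m i p).map Fin.val = nd m i (p:ℕ) := by
  have := p.isLt
  simp only [gd, nd]
  split_ifs <;> simp_all

lemma gs_val (m i : ℕ) (p : Fin m) : (gs m i p).map Fin.val = ns i (p:ℕ) := by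
  simp only [gs, ns]
  split_ifs <;> simp

lemma option_val_inj {M : ℕ} {o₁ o₂ : Option (Fin M)}
    (h : o₁.map Fin.val = o₂.map Fin.val) : o₁ = o₂ := by
  cases o₁ <;> cases o₂ <;> simp_all [Fin.ext_iff]

lemma map_val_bind {M P : ℕ} (o : Option (Fin M)) (g : Fin M → Option (Fin P))
    (n : ℕ → Option ℕ) (hg : ∀ q : Fin M, (g q).map Fin.val = n (q:ℕ)) :
    (o.bind g).map Fin.val = (o.map Fin.val).bind n := by
  cases o <;> simp [hg]

lemma gd_some (m i : ℕ) (p : Fin (m+1)) (l : Fin m) :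
    gd m i p = some l ↔ nd m i (p:ℕ) = some (l:ℕ) := by
  rw [← gd_val]
  cases h : gd m i p <;> simp [Fin.ext_iff]

lemma gd_none (m i : ℕ) (p : Fin (m+1)) :
    gd m i p = none ↔ nd m i (p:ℕ) = none := by
  rw [← gd_val]
  cases h : gd m i p <;> simp

lemma gs_some (m i : ℕ) (p : Fin m) (l : Fin (m+1)) :
    gs m i p = some l ↔ ns i (p:ℕ) = some (l:ℕ) := by
  rw [← gs_val]
  cases h : gs m i p <;> simp [Fin.ext_iff]

lemma nd_eq_some {m i p v : ℕ} :
    nd m i p = some v ↔ (p < i ∧ p < m ∧ v = p) ∨ (¬ p < i ∧ 1 ≤ p ∧ v = p - 1) := by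
  unfold nd
  split_ifs <;> simp <;> omega

lemma nd_eq_none {m i p : ℕ} :
    nd m i p = none ↔ (p < i ∧ ¬ p < m) ∨ (¬ p < i ∧ p = 0) := by
  unfold nd
  split_ifs <;> simp <;> omega

lemma prod_filter_eq_single {α β : Type*} [Fintype α] [DecidableEq α] [CommMonoid β]
    (p : α → Prop) [DecidablePred p] (a : α) (h : ∀ j, p j ↔ j = a) (z : α → β) :
    ∏ j ∈ univ.filter p, z j = z a := by
  rw [show univ.filter p = {a} from by ext j; simp [h]]
  simp

lemma prod_filter_eq_pair {α β : Type*} [Fintype α] [DecidableEq α] [CommMonoid β]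
    (p : α → Prop) [DecidablePred p] (a b : α) (hab : a ≠ b)
    (h : ∀ j, p j ↔ j = a ∨ j = b) (z : α → β) :
    ∏ j ∈ univ.filter p, z j = z a * z b := by
  rw [show univ.filter p = {a, b} from by ext j; simp [h]]
  rw [Finset.prod_insert (by simp [hab]), Finset.prod_singleton]

lemma prod_filter_eq_empty {α β : Type*} [Fintype α] [DecidableEq α] [CommMonoid β]
    (p : α → Prop) [DecidablePred p] (h : ∀ j, ¬ p j) (z : α → β) :
    ∏ j ∈ univ.filter p, z j = 1 := by
  rw [show univ.filter p = ∅ from by ext j; simp [h]]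
  simp


/-! ### ℕ-level simplicial pattern identities -/

lemma nd_bind_nd {m i j p : ℕ} (hij : i < j) (hj : j ≤ m+2) (hp : p ≤ m+1) :
    (nd (m+1) j p).bind (nd m i) = (nd (m+1) i p).bind (nd m (j-1)) := by
  rcases h₁ : nd (m+1) j p with _ | v <;> rcases h₂ : nd (m+1) i p with _ | w <;>
    simp only [Option.bind_none, Option.bind_some]
  · rw [nd_eq_none] at h₁; rw [nd_eq_some] at h₂; rw [eq_comm, nd_eq_none]; omega
  · rw [nd_eq_some] at h₁; rw [nd_eq_none] at h₂; rw [nd_eq_none]; omega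
  · rw [nd_eq_some] at h₁; rw [nd_eq_some] at h₂
    rcases h₃ : nd m i v with _ | a <;> rcases h₄ : nd m (j-1) w with _ | b
    · rfl
    · exfalso; rw [nd_eq_none] at h₃; rw [nd_eq_some] at h₄; omega
    · exfalso; rw [nd_eq_some] at h₃; rw [nd_eq_none] at h₄; omega
    · rw [nd_eq_some] at h₃; rw [nd_eq_some] at h₄
      simp only [Option.some.injEq]; omega

lemma ns_bind_ns {i j p : ℕ} (hij : i ≤ j) :
    (ns j p).bind (ns i) = (ns i p).bind (ns (j+1)) := by
  simp only [ns, Option.bind_some, Option.some.injEq]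
  split_ifs <;> omega

lemma ns_bind_nd {m i j p : ℕ} (hij : i < j) (hj : j ≤ m+1) (hp : p ≤ m) :
    (ns j p).bind (nd (m+1) i) = (nd m i p).bind (ns (j-1)) := by
  simp only [ns, Option.bind_some]
  rcases h : nd m i p with _ | v <;> simp only [ns, Option.bind_none, Option.bind_some]
  · rw [nd_eq_none] at h
    split_ifs <;> rw [nd_eq_none] <;> omega
  · rw [nd_eq_some] at h
    split_ifs <;> rw [nd_eq_some] <;> omega

lemma ns_bind_nd_id {m j p : ℕ} (hj : j ≤ m) (hp : p < m) :
    (ns j p).bind (nd m j) = some p := by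
  simp only [ns, Option.bind_some]
  split_ifs <;> rw [nd_eq_some] <;> omega

lemma ns_bind_nd_id' {m j p : ℕ} (hj : j ≤ m) (hp : p < m) :
    (ns j p).bind (nd m (j+1)) = some p := by
  simp only [ns, Option.bind_some]
  split_ifs <;> rw [nd_eq_some] <;> omega

lemma ns_bind_nd' {m i j p : ℕ} (hij : j + 1 < i) (hi : i ≤ m+2) (hj : j ≤ m+1) (hp : p ≤ m) :
    (ns j p).bind (nd (m+1) i) = (nd m (i-1) p).bind (ns j) := by
  simp only [ns, Option.bind_some]
  rcases h : nd m (i-1) p with _ | v <;> simp only [ns, Option.bind_none, Option.bind_some]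
  · rw [nd_eq_none] at h
    split_ifs <;> rw [nd_eq_none] <;> omega
  · rw [nd_eq_some] at h
    split_ifs <;> rw [nd_eq_some] <;> omega

/-! ### Fin-level pattern identities -/

lemma pat_dd {m i j : ℕ} (hij : i < j) (hj : j ≤ m+2) :
    (fun p : Fin (m+2) => (gd (m+1) j p).bind (gd m i))
      = (fun p => (gd (m+1) i p).bind (gd m (j-1))) := by
  funext p
  apply option_val_inj
  rw [map_val_bind _ _ _ (gd_val m i), map_val_bind _ _ _ (gd_val m (j-1)), gd_val, gd_val]
  exact nd_bind_nd hij hj (by have := p.isLt; omega)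

lemma pat_ss {m i j : ℕ} (hij : i ≤ j) (hj : j ≤ m) :
    (fun p : Fin m => (gs m j p).bind (gs (m+1) i))
      = (fun p => (gs m i p).bind (gs (m+1) (j+1))) := by
  funext p
  apply option_val_inj
  rw [map_val_bind _ _ _ (gs_val (m+1) i), map_val_bind _ _ _ (gs_val (m+1) (j+1)),
    gs_val, gs_val]
  exact ns_bind_ns hij

lemma pat_ds {m i j : ℕ} (hij : i < j) (hj : j ≤ m+1) :
    (fun p : Fin (m+1) => (gs (m+1) j p).bind (gd (m+1) i))
      = (fun p => (gd m i p).bind (gs m (j-1))) := by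
  funext p
  apply option_val_inj
  rw [map_val_bind _ _ _ (gd_val (m+1) i), map_val_bind _ _ _ (gs_val m (j-1)),
    gs_val, gd_val]
  exact ns_bind_nd hij hj (by have := p.isLt; omega)

lemma pat_ds_id {m j : ℕ} (hj : j ≤ m) :
    (fun p : Fin m => (gs m j p).bind (gd m j)) = (fun p => some p) := by
  funext p
  apply option_val_inj
  rw [map_val_bind _ _ _ (gd_val m j), gs_val]
  simpa using ns_bind_nd_id hj p.isLt

lemma pat_ds_id' {m j : ℕ} (hj : j ≤ m) :
    (fun p : Fin m => (gs m j p).bind (gd m (j+1))) = (fun p => some p) := by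
  funext p
  apply option_val_inj
  rw [map_val_bind _ _ _ (gd_val m (j+1)), gs_val]
  simpa using ns_bind_nd_id' hj p.isLt

lemma pat_ds' {m i j : ℕ} (hij : j + 1 < i) (hi : i ≤ m+2) (hj : j ≤ m+1) :
    (fun p : Fin (m+1) => (gs (m+1) j p).bind (gd (m+1) i))
      = (fun p => (gd m (i-1) p).bind (gs m j)) := by
  funext p
  apply option_val_inj
  rw [map_val_bind _ _ _ (gd_val (m+1) i), map_val_bind _ _ _ (gs_val m j),
    gs_val, gd_val]
  exact ns_bind_nd' hij hi hj (by have := p.isLt; omega)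


/-! ### Generator compatibilities -/

section Gen

open PiTensorProduct

variable (C : (m : ℕ) → CommNAlgebra k m)

lemma compat_id (N : ℕ) :
    Compat (C N) (C N) (AlgHom.id k (C N).carrier) (fun p => (some p : Option (Fin N))) := by
  intro x
  simp only [patML_apply, AlgHom.coe_id, id_eq]
  rw [prod_filter_eq_empty (fun j : Fin N => (some j : Option (Fin N)) = none)
      (fun j => by simp) x, one_mul]
  refine congrArg _ (congrArg _ (funext fun l => ?_))
  exact (prod_filter_eq_single (fun j : Fin N => (some j : Option (Fin N)) = some l) l
    (fun j => by simp) x).symm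

lemma compat_d
    (d : (m : ℕ) → ℕ → ((C (m+1)).carrier →ₐ[k] (C m).carrier))
    (hd0 : ∀ (m : ℕ) (x : Fin (m+1) → (C (m+1)).carrier),
      d m 0 ((C (m+1)).op (tprod k x))
        = d m 0 (x 0) * (C m).op (tprod k fun j : Fin m => d m 0 (x j.succ)))
    (hdmid : ∀ (m i : ℕ), 1 ≤ i → i ≤ m → ∀ x : Fin (m+1) → (C (m+1)).carrier,
      d m i ((C (m+1)).op (tprod k x))
        = (C m).op (tprod k fun j : Fin m =>
            if (j : ℕ) < i - 1 then d m i (x j.castSucc)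
            else if (j : ℕ) = i - 1 then d m i (x j.castSucc) * d m i (x j.succ)
            else d m i (x j.succ)))
    (hdlast : ∀ (m : ℕ) (x : Fin (m+1) → (C (m+1)).carrier),
      d m (m+1) ((C (m+1)).op (tprod k x))
        = (C m).op (tprod k fun j : Fin m => d m (m+1) (x j.castSucc))
            * d m (m+1) (x (Fin.last m)))
    (m i : ℕ) (hi : i ≤ m + 1) :
    Compat (C (m+1)) (C m) (d m i) (gd m i) := by
  intro x
  simp only [patML_apply]
  by_cases h0 : i = 0
  · subst h0
    rw [hd0 m x]
    refine congrArg₂ (· * ·) ?_ (congrArg _ (congrArg _ (funext fun l => ?_)))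
    · refine (prod_filter_eq_single (fun j => gd m 0 j = none) (0 : Fin (m+1))
        (fun j => ?_) (fun j => d m 0 (x j))).symm
      simp only [gd_none]
      simp only [nd]
      split_ifs <;> simp [Fin.ext_iff, -Fin.val_eq_zero_iff] <;> omega
    · refine (prod_filter_eq_single (fun j => gd m 0 j = some l) l.succ
        (fun j => ?_) (fun j => d m 0 (x j))).symm
      simp only [gd_some]
      have := l.isLt
      simp only [nd, Fin.val_succ]
      split_ifs <;> simp [Fin.ext_iff] <;> omega
  · by_cases hlast : i = m + 1
    · subst hlast
      rw [hdlast m x, mul_comm]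
      refine congrArg₂ (· * ·) ?_ (congrArg _ (congrArg _ (funext fun l => ?_)))
      · refine (prod_filter_eq_single (fun j => gd m (m+1) j = none) (Fin.last m)
          (fun j => ?_) (fun j => d m (m+1) (x j))).symm
        simp only [gd_none]
        have := j.isLt
        simp only [nd]
        split_ifs <;> simp [Fin.ext_iff, Fin.last] <;> omega
      · refine (prod_filter_eq_single (fun j => gd m (m+1) j = some l) l.castSucc
          (fun j => ?_) (fun j => d m (m+1) (x j))).symm
        simp only [gd_some]
        have := l.isLt
        have := j.isLt
        simp only [nd, Fin.coe_castSucc]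
        split_ifs <;> simp [Fin.ext_iff] <;> omega
    · have h1 : 1 ≤ i := by omega
      have h2 : i ≤ m := by omega
      rw [hdmid m i h1 h2 x,
        prod_filter_eq_empty (fun j => gd m i j = none)
          (fun j => by
            simp only [gd_none]
            have := j.isLt
            simp only [nd]
            split_ifs <;> simp <;> omega) (fun j => d m i (x j)), one_mul]
      refine congrArg _ (congrArg _ (funext fun l => ?_))
      have hlm := l.isLt
      rcases lt_trichotomy (l : ℕ) (i - 1) with hl | hl | hl
      · rw [if_pos hl]
        refine (prod_filter_eq_single (fun j => gd m i j = some l) l.castSucc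
          (fun j => ?_) (fun j => d m i (x j))).symm
        simp only [gd_some]
        have := j.isLt
        simp only [nd, Fin.coe_castSucc]
        split_ifs <;> simp [Fin.ext_iff] <;> omega
      · rw [if_neg (by omega), if_pos hl]
        refine (prod_filter_eq_pair (fun j => gd m i j = some l) l.castSucc l.succ
          (by simp [Fin.ext_iff]) (fun j => ?_) (fun j => d m i (x j))).symm
        simp only [gd_some]
        have := j.isLt
        constructor
        · intro h
          rw [nd_eq_some] at h
          simp only [Fin.ext_iff, Fin.coe_castSucc, Fin.val_succ]
          omega
        · intro h
          rw [nd_eq_some]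
          simp only [Fin.ext_iff, Fin.coe_castSucc, Fin.val_succ] at h
          omega
      · rw [if_neg (by omega), if_neg (by omega)]
        refine (prod_filter_eq_single (fun j => gd m i j = some l) l.succ
          (fun j => ?_) (fun j => d m i (x j))).symm
        simp only [gd_some]
        have := j.isLt
        simp only [nd, Fin.val_succ]
        split_ifs <;> simp [Fin.ext_iff] <;> omega

lemma compat_s
    (s : (m : ℕ) → ℕ → ((C m).carrier →ₐ[k] (C (m+1)).carrier))
    (hs : ∀ (m i : ℕ) (hi : i ≤ m) (x : Fin m → (C m).carrier),
      s m i ((C m).op (tprod k x))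
        = (C (m+1)).op (tprod k fun j : Fin (m+1) =>
            if h : (j : ℕ) < i then s m i (x ⟨(j : ℕ), Nat.lt_of_lt_of_le h hi⟩)
            else if h' : (j : ℕ) = i then 1
            else s m i (x ⟨(j : ℕ) - 1, Nat.sub_one_lt_of_le (by omega) (Nat.lt_succ_iff.mp j.isLt)⟩)))
    (m i : ℕ) (hi : i ≤ m) :
    Compat (C m) (C (m+1)) (s m i) (gs m i) := by
  intro x
  simp only [patML_apply]
  rw [hs m i hi x,
    prod_filter_eq_empty (fun p => gs m i p = none) (fun p => by simp [gs])
      (fun p => s m i (x p)), one_mul]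
  refine congrArg _ (congrArg _ (funext fun j => ?_))
  have hj := j.isLt
  by_cases h1 : (j : ℕ) < i
  · rw [dif_pos h1]
    refine (prod_filter_eq_single (fun q => gs m i q = some j) (⟨(j : ℕ), by omega⟩ : Fin m)
      (fun q => ?_) (fun q => s m i (x q))).symm
    simp only [gs_some]
    have := q.isLt
    simp only [ns, Option.some.injEq]
    split_ifs <;> simp [Fin.ext_iff] <;> omega
  · by_cases h2 : (j : ℕ) = i
    · rw [dif_neg h1, dif_pos h2]
      refine (prod_filter_eq_empty (fun q => gs m i q = some j)
        (fun q => ?_) (fun q => s m i (x q))).symm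
      simp only [gs_some]
      have := q.isLt
      simp only [ns, Option.some.injEq]
      split_ifs <;> omega
    · rw [dif_neg h1, dif_neg h2]
      refine (prod_filter_eq_single (fun q => gs m i q = some j)
        (⟨(j : ℕ) - 1, by omega⟩ : Fin m) (fun q => ?_) (fun q => s m i (x q))).symm
      simp only [gs_some]
      have := q.isLt
      simp only [ns, Option.some.injEq]
      split_ifs <;> simp [Fin.ext_iff] <;> omega

end Gen

end SimplicialAux

open PiTensorProduct in
/-- The initial commutative `n`-algebras `C_n` (for varying
`n`) form a simplicial algebra: the algebra homomorphisms
`d_i : C_n → C_{n-1}` (`0 ≤ i ≤ n`) and `s_i : C_n → C_{n+1}` (`0 ≤ i ≤ n`)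
determined (via initiality) by
`d_0(λ_n)(x_1,…,x_n) = μ(x_1, λ_{n-1}(x_2,…,x_n))`,
`d_i(λ_n)(x_1,…,x_n) = λ_{n-1}(x_1,…,μ(x_i,x_{i+1}),…,x_n)` (`1 ≤ i ≤ n-1`),
`d_n(λ_n)(x_1,…,x_n) = μ(λ_{n-1}(x_1,…,x_{n-1}),x_n)` and
`s_i(λ_n)(x_1,…,x_n) = λ_{n+1}(x_1,…,x_i,1,x_{i+1},…,x_n)`
satisfy the simplicial identities.  (Here, in `0`-indexed form, `C (m+1)` has
the faces `d m i : C (m+1) → C m` for `i ≤ m+1` and the degeneracies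
`s m i : C m → C (m+1)` for `i ≤ m`.) -/
theorem initial_commNAlgebras_form_simplicial_algebra
    (k : Type) [Field k] [CharZero k]
    (C : (m : ℕ) → CommNAlgebra k m)
    -- each `(C_m, λ_m)` is initial
    (hinit : ∀ (m : ℕ) (A : CommNAlgebra k m),
      ∃! f : (C m).carrier →ₐ[k] A.carrier,
        A.op ∘ₗ (PiTensorProduct.map fun _ : Fin m => f.toLinearMap)
          = f.toLinearMap ∘ₗ (C m).op)
    -- face maps
    (d : (m : ℕ) → ℕ → ((C (m+1)).carrier →ₐ[k] (C m).carrier))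
    -- degeneracy maps
    (s : (m : ℕ) → ℕ → ((C m).carrier →ₐ[k] (C (m+1)).carrier))
    -- `d_0(λ)(x_0,…,x_m) = μ(d_0 x_0, λ(d_0 x_1, …, d_0 x_m))`
    (hd0 : ∀ (m : ℕ) (x : Fin (m+1) → (C (m+1)).carrier),
      d m 0 ((C (m+1)).op (tprod k x))
        = d m 0 (x 0) * (C m).op (tprod k fun j : Fin m => d m 0 (x j.succ)))
    -- inner faces: merge the `(i-1)`-st and `i`-th arguments (`1 ≤ i ≤ m`)
    (hdmid : ∀ (m i : ℕ), 1 ≤ i → i ≤ m → ∀ x : Fin (m+1) → (C (m+1)).carrier,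
      d m i ((C (m+1)).op (tprod k x))
        = (C m).op (tprod k fun j : Fin m =>
            if (j : ℕ) < i - 1 then d m i (x j.castSucc)
            else if (j : ℕ) = i - 1 then d m i (x j.castSucc) * d m i (x j.succ)
            else d m i (x j.succ)))
    -- `d_{m+1}(λ)(x_0,…,x_m) = μ(λ(d x_0, …, d x_{m-1}), d x_m)`
    (hdlast : ∀ (m : ℕ) (x : Fin (m+1) → (C (m+1)).carrier),
      d m (m+1) ((C (m+1)).op (tprod k x))
        = (C m).op (tprod k fun j : Fin m => d m (m+1) (x j.castSucc))
            * d m (m+1) (x (Fin.last m)))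
    -- degeneracies insert a `1` in position `i` (`0 ≤ i ≤ m`)
    (hs : ∀ (m i : ℕ) (hi : i ≤ m) (x : Fin m → (C m).carrier),
      s m i ((C m).op (tprod k x))
        = (C (m+1)).op (tprod k fun j : Fin (m+1) =>
            if h : (j : ℕ) < i then s m i (x ⟨(j : ℕ), by omega⟩)
            else if h' : (j : ℕ) = i then 1
            else s m i (x ⟨(j : ℕ) - 1, by have := j.isLt; omega⟩))) :
    -- the simplicial identities
    (∀ (m i j : ℕ), i < j → j ≤ m + 2 →
      (d m i).comp (d (m+1) j) = (d m (j-1)).comp (d (m+1) i)) ∧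
    (∀ (m i j : ℕ), i ≤ j → j ≤ m →
      (s (m+1) i).comp (s m j) = (s (m+1) (j+1)).comp (s m i)) ∧
    (∀ (m i j : ℕ), i < j → j ≤ m + 1 →
      (d (m+1) i).comp (s (m+1) j) = (s m (j-1)).comp (d m i)) ∧
    (∀ (m j : ℕ), j ≤ m →
      (d m j).comp (s m j) = AlgHom.id k (C m).carrier ∧
      (d m (j+1)).comp (s m j) = AlgHom.id k (C m).carrier) ∧
    (∀ (m i j : ℕ), j + 1 < i → i ≤ m + 2 → j ≤ m + 1 →
      (d (m+1) i).comp (s (m+1) j) = (s m j).comp (d m (i-1))) := by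
  
  have hd := SimplicialAux.compat_d C d hd0 hdmid hdlast
  have hsc := SimplicialAux.compat_s C s hs
  refine ⟨?_, ?_, ?_, ?_, ?_⟩
  · intro m i j hij hj
    have c1 := SimplicialAux.Compat.comp (hd m i (by omega)) (hd (m+1) j (by omega))
    have c2 := SimplicialAux.Compat.comp (hd m (j-1) (by omega)) (hd (m+1) i (by omega))
    rw [← SimplicialAux.pat_dd hij hj] at c2
    exact SimplicialAux.compat_unique C hinit c1 c2
  · intro m i j hij hj
    have c1 := SimplicialAux.Compat.comp (hsc (m+1) i (by omega)) (hsc m j hj)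
    have c2 := SimplicialAux.Compat.comp (hsc (m+1) (j+1) (by omega)) (hsc m i (by omega))
    rw [SimplicialAux.pat_ss hij hj] at c1
    exact SimplicialAux.compat_unique C hinit c1 c2
  · intro m i j hij hj
    have c1 := SimplicialAux.Compat.comp (hd (m+1) i (by omega)) (hsc (m+1) j (by omega))
    have c2 := SimplicialAux.Compat.comp (hsc m (j-1) (by omega)) (hd m i (by omega))
    rw [SimplicialAux.pat_ds hij hj] at c1
    exact SimplicialAux.compat_unique C hinit c1 c2
  · intro m j hj
    constructor
    · have c1 := SimplicialAux.Compat.comp (hd m j (by omega)) (hsc m j hj)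
      rw [SimplicialAux.pat_ds_id hj] at c1
      exact SimplicialAux.compat_unique C hinit c1 (SimplicialAux.compat_id C m)
    · have c1 := SimplicialAux.Compat.comp (hd m (j+1) (by omega)) (hsc m j hj)
      rw [SimplicialAux.pat_ds_id' hj] at c1
      exact SimplicialAux.compat_unique C hinit c1 (SimplicialAux.compat_id C m)
  · intro m i j hij hi hj
    have c1 := SimplicialAux.Compat.comp (hd (m+1) i (by omega)) (hsc (m+1) j (by omega))
    have c2 := SimplicialAux.Compat.comp (hsc m j (by omega)) (hd m (i-1) (by omega))
    rw [SimplicialAux.pat_ds' hij hi (by omega)] at c1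
    exact SimplicialAux.compat_unique C hinit c1 c2
end
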